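/- (Wagner–Preston representation theorem) Every inverse semigroup S can be embedded in the symmetric inverse monoid on its underlying set: there is an injective map λ : S → I(S), where I(S) is the monoid of all partial bijections of the set S (bijections between subsets of S) under composition of partial functions, such that λ(a·b) = λ(a) ∘ λ(b) for all a, b ∈ S. Explicitly, one may take λ(a) to be the bijection from the subset a⁻¹·a·S onto the subset a·a⁻¹·S given by x ↦ a·x. -/

import Mathlib

open Classical

section
variable {S : Type*} [Semigroup S] (inv : S → S)
    (h1 : ∀ a : S, a * inv a * a = a)
    (h2 : ∀ a : S, inv a * a * inv a = inv a)
    (huniq : ∀ a b : S, a * b * a = a → b * a * b = b → b = inv a)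

include h1 h2 huniq

lemma wp_inv_inv : ∀ a : S, inv (inv a) = a := fun a => (huniq (inv a) a (h2 a) (h1 a)).symm

-- e*f is idempotent when e, f are
lemma wp_idem_mul (e f : S) (he : e * e = e) (hf : f * f = f) :
    (e * f) * (e * f) = e * f := by
  set x := inv (e * f) with hxdef
  have hx1 : (e * f) * x * (e * f) = e * f := h1 _
  have hx2 : x * (e * f) * x = x := h2 _
  have hfxe : f * x * e = x := by
    apply huniq (e * f) (f * x * e)
    · -- (e*f)*(f*x*e)*(e*f) = e*f
      have : (e * f) * (f * x * e) * (e * f) = (e * f) * x * (e * f) := by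
        simp only [mul_assoc]
        rw [← mul_assoc f f, hf, ← mul_assoc e e, he]
      rw [this, hx1]
    · -- (f*x*e)*(e*f)*(f*x*e) = f*x*e
      have : (f * x * e) * (e * f) * (f * x * e) = f * (x * (e * f) * x) * e := by
        simp only [mul_assoc]
        rw [← mul_assoc e e, he, ← mul_assoc f f, hf]
      rw [this, hx2]
  have hxx : x * x = x := by
    conv_lhs => rw [← hfxe]
    calc f * x * e * (f * x * e) = f * (x * (e * f) * x) * e := by
          simp only [mul_assoc]
      _ = f * x * e := by rw [hx2]
      _ = x := hfxe
  have hex : e * f = inv x := huniq x (e * f) hx2 hx1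
  have hxinv : x = inv x := huniq x x (by rw [hxx, hxx]) (by rw [hxx, hxx])
  have : e * f = x := by rw [hex, ← hxinv]
  rw [this, hxx]

lemma wp_comm (e f : S) (he : e * e = e) (hf : f * f = f) : e * f = f * e := by
  have hef := wp_idem_mul inv h1 h2 huniq e f he hf
  have hfe := wp_idem_mul inv h1 h2 huniq f e hf he
  have h₁ : f * e = inv (e * f) := by
    apply huniq
    · -- (e*f)*(f*e)*(e*f) = e*f
      calc (e * f) * (f * e) * (e * f) = (e * (f * f)) * ((e * e) * f) := by
            simp only [mul_assoc]
        _ = (e * f) * (e * f) := by rw [hf, he]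
        _ = e * f := hef
    · calc (f * e) * (e * f) * (f * e) = (f * (e * e)) * ((f * f) * e) := by
            simp only [mul_assoc]
        _ = (f * e) * (f * e) := by rw [he, hf]
        _ = f * e := hfe
  have h₂ : e * f = inv (e * f) := huniq _ _ (by rw [hef, hef]) (by rw [hef, hef])
  rw [h₂, ← h₁]

lemma wp_idem (a : S) : (inv a * a) * (inv a * a) = inv a * a := by
  rw [← mul_assoc, h2]

lemma wp_idem2 (a : S) : (a * inv a) * (a * inv a) = a * inv a := by
  rw [← mul_assoc, h1]

lemma wp_inv_mul (a b : S) : inv (a * b) = inv b * inv a := by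
  have key : ∀ u v : S, u * (u * inv u) = u → True := fun _ _ _ => trivial
  have comm := wp_comm inv h1 h2 huniq (b * inv b) (inv a * a)
      (wp_idem2 inv h1 h2 huniq b) (wp_idem inv h1 h2 huniq a)
  symm
  apply huniq
  · -- (a*b)*(inv b*inv a)*(a*b) = a*b
    calc (a * b) * (inv b * inv a) * (a * b)
        = a * ((b * inv b) * (inv a * a)) * b := by simp only [mul_assoc]
      _ = a * ((inv a * a) * (b * inv b)) * b := by rw [comm]
      _ = (a * inv a * a) * (b * inv b * b) := by simp only [mul_assoc]
      _ = a * b := by rw [h1, h1]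
  · calc (inv b * inv a) * (a * b) * (inv b * inv a)
        = inv b * ((inv a * a) * (b * inv b)) * inv a := by simp only [mul_assoc]
      _ = inv b * ((b * inv b) * (inv a * a)) * inv a := by rw [comm]
      _ = (inv b * b * inv b) * (inv a * a * inv a) := by simp only [mul_assoc]
      _ = inv b * inv a := by rw [h2, h2]

lemma wp_dom (a x : S) : (∃ y : S, x = inv a * a * y) ↔ inv a * a * x = x := by
  constructor
  · rintro ⟨y, rfl⟩
    rw [← mul_assoc, ← mul_assoc, h2]
  · intro h; exact ⟨x, h.symm⟩

end

set_option maxHeartbeats 1000000 in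
theorem wagner_preston {S : Type*} [Semigroup S] (inv : S → S)
    (h1 : ∀ a : S, a * inv a * a = a)
    (h2 : ∀ a : S, inv a * a * inv a = inv a)
    (huniq : ∀ a b : S, a * b * a = a → b * a * b = b → b = inv a) :
    ∃ lam : S → (S ≃. S),
      Function.Injective lam ∧
      (∀ a b : S, lam (a * b) = (lam b).trans (lam a)) ∧
      (∀ a x : S,
        (lam a) x = if ∃ y : S, x = inv a * a * y then some (a * x) else none) := by
  have iinv := wp_inv_inv inv h1 h2 huniq
  have comm := wp_comm inv h1 h2 huniq
  have idem := wp_idem inv h1 h2 huniq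
  have idem2 := wp_idem2 inv h1 h2 huniq
  have invmul := wp_inv_mul inv h1 h2 huniq
  have hdom := wp_dom inv h1 h2 huniq
  have hdom2 : ∀ a x : S, (∃ y : S, x = a * inv a * y) ↔ a * inv a * x = x := by
    intro a x
    have := hdom (inv a) x
    rwa [iinv] at this
  refine ⟨fun a =>
    { toFun := fun x => if ∃ y : S, x = inv a * a * y then some (a * x) else none
      invFun := fun x => if ∃ y : S, x = a * inv a * y then some (inv a * x) else none
      inv := ?_ }, ?_, ?_, ?_⟩
  · -- inverse condition
    intro u v
    simp only [Option.mem_def, hdom, hdom2]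
    split_ifs with hv hu hu
    · constructor
      · rintro h; rw [Option.some_inj] at *
        rw [← h, ← mul_assoc, hv]
      · rintro h; rw [Option.some_inj] at *
        rw [← h, ← mul_assoc, hu]
    · constructor
      · rintro h; rw [Option.some_inj] at h
        exact absurd (by rw [← h, ← mul_assoc, h2]) hu
      · rintro h; exact absurd h (by simp)
    · constructor
      · rintro h; exact absurd h (by simp)
      · rintro h; rw [Option.some_inj] at h
        exact absurd (by rw [← h, ← mul_assoc, h1]) hv
    · simp
  · -- injectivity
    intro a b hab
    have key : ∀ x, (if ∃ y : S, x = inv a * a * y then some (a * x) else none)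
        = (if ∃ y : S, x = inv b * b * y then some (b * x) else none) :=
      fun x => congrFun (congrArg PEquiv.toFun hab) x
    have e1 : inv b * b * (inv a * a) = inv a * a ∧ b * (inv a * a) = a := by
      have w1 : ∃ y : S, inv a * a = inv a * a * y := ⟨inv a * a, (idem a).symm⟩
      have hk := key (inv a * a)
      rw [if_pos w1] at hk
      split_ifs at hk with hc
      exact ⟨(hdom b _).1 hc, by
        have := Option.some_inj.mp hk
        rw [← this, ← mul_assoc, h1]⟩
    have e2 : inv a * a * (inv b * b) = inv b * b ∧ a * (inv b * b) = b := by
      have w2 : ∃ y : S, inv b * b = inv b * b * y := ⟨inv b * b, (idem b).symm⟩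
      have hk := key (inv b * b)
      rw [if_pos w2] at hk
      split_ifs at hk with hc
      exact ⟨(hdom a _).1 hc, by
        have := Option.some_inj.mp hk.symm
        rw [← this, ← mul_assoc, h1]⟩
    have hef : inv a * a = inv b * b := by
      rw [← e1.1, comm _ _ (idem b) (idem a), e2.1]
    calc a = b * (inv a * a) := e1.2.symm
      _ = b * (inv b * b) := by rw [hef]
      _ = b := by rw [← mul_assoc, h1]
  · -- multiplicativity
    intro a b
    apply PEquiv.ext
    intro x
    show (if ∃ y : S, x = inv (a * b) * (a * b) * y then some (a * b * x) else none)
      = ((if ∃ y : S, x = inv b * b * y then some (b * x) else none).bind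
          (fun z => if ∃ y : S, z = inv a * a * y then some (a * z) else none))
    simp only [hdom]
    by_cases hL : inv (a * b) * (a * b) * x = x
    · have hL' : inv b * inv a * (a * b) * x = x := by
        rw [← invmul]; exact hL
      have hR1 : inv b * b * x = x := by
        conv_lhs => rw [← hL']
        calc inv b * b * (inv b * inv a * (a * b) * x)
            = (inv b * b * inv b) * (inv a * ((a * b) * x)) := by simp only [mul_assoc]
          _ = inv b * (inv a * ((a * b) * x)) := by rw [h2]
          _ = inv b * inv a * (a * b) * x := by simp only [mul_assoc]
          _ = x := hL'
      have hbx : inv a * a * (b * x) = b * x := by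
        have hc := comm (b * inv b) (inv a * a) (idem2 b) (idem a)
        symm
        calc b * x = b * (inv b * inv a * (a * b) * x) := by rw [hL']
          _ = (b * inv b) * (inv a * a) * (b * x) := by simp only [mul_assoc]
          _ = (inv a * a) * (b * inv b) * (b * x) := by rw [hc]
          _ = inv a * a * ((b * inv b * b) * x) := by simp only [mul_assoc]
          _ = inv a * a * (b * x) := by rw [h1]
      rw [if_pos hL, if_pos hR1, Option.bind_some, if_pos hbx, Option.some_inj, mul_assoc]
    · rw [if_neg hL]
      by_cases hR1 : inv b * b * x = x
      · rw [if_pos hR1, Option.bind_some]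
        have : ¬ inv a * a * (b * x) = b * x := by
          intro hbx
          apply hL
          calc inv (a * b) * (a * b) * x
              = inv b * inv a * (a * b) * x := by rw [invmul]
            _ = inv b * (inv a * a * (b * x)) := by simp only [mul_assoc]
            _ = inv b * (b * x) := by rw [hbx]
            _ = inv b * b * x := by rw [mul_assoc]
            _ = x := hR1
        rw [if_neg this]
      · rw [if_neg hR1, Option.bind_none]
  · intro a x; rfl
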